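/- If some connected component of the interaction graph G of a circuit slice has more than max_j c_j vertices, then no valid assignment exists; equivalently, F(x, y) > 0 for every binary x and y. -/

import Mathlib

/-- The Laplacian matrix `L = D - A` of a finite simple graph, over `ℤ`. -/
def graphLaplacian {n : ℕ} (G : SimpleGraph (Fin n)) [DecidableRel G.Adj] :
    Matrix (Fin n) (Fin n) ℤ :=
  fun i j => (if i = j then (G.degree i : ℤ) else 0) - (if G.Adj i j then 1 else 0)

/-- Uniqueness penalty `S(x) = ∑ᵢ (∑ⱼ xᵢⱼ - 1)²`. -/
def Spen (n k : ℕ) (x : Fin n → Fin k → ℤ) : ℤ :=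
  ∑ i, (∑ j, x i j - 1) ^ 2

/-- Capacity penalty `R(x,y) = ∑ⱼ (∑ᵢ xᵢⱼ - ∑ᵢ' yᵢ'ⱼ)²` with `cⱼ` slack
variables per core. -/
def Rpen (n k : ℕ) (c : Fin k → ℕ) (x : Fin n → Fin k → ℤ)
    (y : (j : Fin k) → Fin (c j) → ℤ) : ℤ :=
  ∑ j, (∑ i, x i j - ∑ i', y j i') ^ 2

/-- Cut-edge penalty `P(x) = ∑ⱼ xⱼᵀ L xⱼ`. -/
def Ppen (n k : ℕ) (G : SimpleGraph (Fin n)) [DecidableRel G.Adj]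
    (x : Fin n → Fin k → ℤ) : ℤ :=
  ∑ j, ∑ u, ∑ v, x u j * graphLaplacian G u v * x v j

/-- Per-slice QUBO objective `F(x,y) = S(x) + R(x,y) + P(x)`. -/
def Fobj (n k : ℕ) (c : Fin k → ℕ) (G : SimpleGraph (Fin n)) [DecidableRel G.Adj]
    (x : Fin n → Fin k → ℤ) (y : (j : Fin k) → Fin (c j) → ℤ) : ℤ :=
  Spen n k x + Rpen n k c x y + Ppen n k G x

lemma quad_eq {n : ℕ} (G : SimpleGraph (Fin n)) [DecidableRel G.Adj] (f : Fin n → ℤ) :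
    2 * (∑ u, ∑ v, f u * graphLaplacian G u v * f v)
      = ∑ u, ∑ v, (if G.Adj u v then (f u - f v) ^ 2 else 0) := by
  have hdeg : ∀ u : Fin n, (G.degree u : ℤ) = ∑ v, if G.Adj u v then (1:ℤ) else 0 := by
    intro u
    rw [Finset.sum_boole, ← SimpleGraph.neighborFinset_eq_filter, SimpleGraph.degree]
  have h1 : (∑ u, ∑ v, f u * graphLaplacian G u v * f v)
      = (∑ u, ∑ v, if G.Adj u v then f u * f u else 0)
        - ∑ u, ∑ v, if G.Adj u v then f u * f v else 0 := by
    rw [← Finset.sum_sub_distrib]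
    refine Finset.sum_congr rfl fun u _ => ?_
    unfold graphLaplacian
    rw [← Finset.sum_sub_distrib]
    have : ∀ v, f u * ((if u = v then (G.degree u : ℤ) else 0) - (if G.Adj u v then 1 else 0)) * f v
        = (if u = v then (G.degree u : ℤ) * (f u * f v) else 0) - (if G.Adj u v then f u * f v else 0) := by
      intro v; by_cases h : u = v <;> by_cases h2 : G.Adj u v <;> simp [h, h2] <;> ring
    rw [Finset.sum_congr rfl fun v _ => this v, Finset.sum_sub_distrib,
      Finset.sum_ite_eq Finset.univ u (fun v => (G.degree u : ℤ) * (f u * f v))]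
    simp only [Finset.mem_univ, if_true, hdeg u, Finset.sum_mul, Finset.sum_sub_distrib]
    congr 1
    refine Finset.sum_congr rfl fun v _ => ?_
    by_cases h2 : G.Adj u v <;> simp [h2]
  have h2 : (∑ u, ∑ v, if G.Adj u v then f u * f u else 0)
      = ∑ u, ∑ v, if G.Adj u v then f v * f v else 0 := by
    rw [Finset.sum_comm]
    refine Finset.sum_congr rfl fun u _ => Finset.sum_congr rfl fun v _ => ?_
    by_cases h : G.Adj u v
    · simp [h, h.symm]
    · have h' : ¬ G.Adj v u := fun hh => h hh.symm
      simp [h, h']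
  rw [h1]
  have : 2 * ((∑ u, ∑ v, if G.Adj u v then f u * f u else 0)
        - ∑ u, ∑ v, if G.Adj u v then f u * f v else 0)
      = ((∑ u, ∑ v, if G.Adj u v then f u * f u else 0)
        + (∑ u, ∑ v, if G.Adj u v then f v * f v else 0))
        - 2 * ∑ u, ∑ v, if G.Adj u v then f u * f v else 0 := by
    rw [← h2]; ring
  rw [this]
  simp only [← Finset.sum_add_distrib, Finset.mul_sum, ← Finset.sum_sub_distrib]
  refine Finset.sum_congr rfl fun u _ => Finset.sum_congr rfl fun v _ => ?_
  by_cases h : G.Adj u v <;> simp [h] <;> ring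

open Classical in
/-- If some connected component of the interaction graph `G` has more vertices
than every core capacity `cⱼ`, then no valid assignment exists:
`F(x,y) > 0` for every binary `x` and `y`. -/
theorem big_component_no_valid_assignment (n k : ℕ) (c : Fin k → ℕ)
    (G : SimpleGraph (Fin n)) [DecidableRel G.Adj]
    (K : G.ConnectedComponent)
    (hK : ∀ j, c j < (Finset.univ.filter
        (fun v => G.connectedComponentMk v = K)).card) :
    ∀ (x : Fin n → Fin k → ℤ) (y : (j : Fin k) → Fin (c j) → ℤ),
      (∀ i j, x i j = 0 ∨ x i j = 1) →
      (∀ j i', y j i' = 0 ∨ y j i' = 1) →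
      0 < Fobj n k c G x y := by
  intro x y hx hy
  -- nonnegativity of the three parts
  have hS : 0 ≤ Spen n k x := Finset.sum_nonneg fun i _ => sq_nonneg _
  have hR : 0 ≤ Rpen n k c x y := Finset.sum_nonneg fun j _ => sq_nonneg _
  have hQ : ∀ j : Fin k, 0 ≤ ∑ u, ∑ v, x u j * graphLaplacian G u v * x v j := by
    intro j
    have h2 := quad_eq G (fun u => x u j)
    have hnn : 0 ≤ ∑ u, ∑ v, (if G.Adj u v then (x u j - x v j) ^ 2 else 0) := by
      refine Finset.sum_nonneg fun u _ => Finset.sum_nonneg fun v _ => ?_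
      split <;> [exact sq_nonneg _; exact le_refl 0]
    nlinarith [h2, hnn]
  have hP : 0 ≤ Ppen n k G x := Finset.sum_nonneg fun j _ => hQ j
  rcases lt_or_eq_of_le (by unfold Fobj; linarith : (0:ℤ) ≤ Fobj n k c G x y) with h | h
  · exact h
  exfalso
  -- each part is 0
  have hF := h.symm
  unfold Fobj at hF
  have hS0 : Spen n k x = 0 := by linarith
  have hR0 : Rpen n k c x y = 0 := by linarith
  have hP0 : Ppen n k G x = 0 := by linarith
  -- row sums are 1
  have hrow : ∀ i, ∑ j, x i j = 1 := by
    intro i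
    have := (Finset.sum_eq_zero_iff_of_nonneg (fun i _ => sq_nonneg _)).mp hS0 i (Finset.mem_univ i)
    have := sq_eq_zero_iff.mp this
    linarith
  -- column sums equal slack sums, hence ≤ c j
  have hcol : ∀ j, ∑ i, x i j ≤ (c j : ℤ) := by
    intro j
    have h0 := (Finset.sum_eq_zero_iff_of_nonneg (fun j _ => sq_nonneg _)).mp hR0 j (Finset.mem_univ j)
    have h1 : ∑ i, x i j = ∑ i', y j i' := by
      have := sq_eq_zero_iff.mp h0; linarith
    have h2 : ∑ i', y j i' ≤ (c j : ℤ) := by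
      calc ∑ i', y j i' ≤ ∑ _i' : Fin (c j), (1:ℤ) :=
            Finset.sum_le_sum fun i' _ => by rcases hy j i' with h | h <;> simp [h]
        _ = (c j : ℤ) := by simp
    linarith
  -- adjacent vertices get identical rows
  have hadj : ∀ u v, G.Adj u v → ∀ j, x u j = x v j := by
    intro u v huv j
    have hQ0 : ∑ u, ∑ v, x u j * graphLaplacian G u v * x v j = 0 :=
      (Finset.sum_eq_zero_iff_of_nonneg (fun j _ => hQ j)).mp hP0 j (Finset.mem_univ j)
    have h2 := quad_eq G (fun u => x u j)
    rw [hQ0, mul_zero] at h2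
    have hterm : ∀ u ∈ Finset.univ, ∑ v, (if G.Adj u v then (x u j - x v j) ^ 2 else 0) = 0 := by
      refine (Finset.sum_eq_zero_iff_of_nonneg fun u _ => ?_).mp h2.symm
      refine Finset.sum_nonneg fun v _ => ?_
      split <;> [exact sq_nonneg _; exact le_refl 0]
    have hterm2 := (Finset.sum_eq_zero_iff_of_nonneg fun v _ => by
        split <;> [exact sq_nonneg _; exact le_refl 0]).mp
      (hterm u (Finset.mem_univ u)) v (Finset.mem_univ v)
    rw [if_pos huv] at hterm2
    have := sq_eq_zero_iff.mp hterm2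
    linarith
  -- reachable vertices get identical rows
  have hreach : ∀ u v, G.Reachable u v → ∀ j, x u j = x v j := by
    intro u v huv j
    obtain ⟨w⟩ := huv
    induction w with
    | nil => rfl
    | cons h p ih => rw [hadj _ _ h j]; exact ih
  -- pick a representative of K and its core
  obtain ⟨v₀, hv₀⟩ := K.exists_rep
  have hex : ∃ j₀, x v₀ j₀ = 1 := by
    by_contra hno
    push_neg at hno
    have : ∀ j, x v₀ j = 0 := fun j => (hx v₀ j).resolve_right (hno j)
    have hs := hrow v₀
    rw [Finset.sum_congr rfl fun j _ => this j] at hs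
    simp at hs
  obtain ⟨j₀, hj₀⟩ := hex
  -- every vertex of K is assigned to core j₀
  have hmem : ∀ v, G.connectedComponentMk v = K → x v j₀ = 1 := by
    intro v hv
    have hr : G.Reachable v v₀ := SimpleGraph.ConnectedComponent.exact (hv.trans hv₀.symm)
    rw [hreach v v₀ hr j₀, hj₀]
  -- card bound
  set Kset := Finset.univ.filter (fun v => G.connectedComponentMk v = K) with hKset
  have hcard : (Kset.card : ℤ) ≤ ∑ i, x i j₀ := by
    have h1 : (Kset.card : ℤ) = ∑ v ∈ Kset, x v j₀ := by
      rw [Finset.sum_congr rfl (fun v hv => hmem v (Finset.mem_filter.mp hv).2)]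
      simp only [Finset.sum_const, nsmul_eq_mul, mul_one]
      congr
    rw [h1]
    refine Finset.sum_le_sum_of_subset_of_nonneg (Finset.subset_univ _) ?_
    intro i _ _
    rcases hx i j₀ with h | h <;> simp [h]
  have := hcol j₀
  have := hK j₀
  have : ((c j₀ : ℤ)) < (Kset.card : ℤ) := by exact_mod_cast this
  linarith
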